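/- Let Z be a compact topological space of covering dimension d that contains a subspace S homeomorphic to the d-sphere S^d. Then Z admits a continuous self-map without fixed points. -/

import Mathlib

/-- Covering dimension at most `n`: every open cover admits an open refinement
of order at most `n + 1`. -/
def CoveringDimLE (Z : Type*) [TopologicalSpace Z] (n : ℕ) : Prop :=
  ∀ (ι : Type) (U : ι → Set Z), (∀ i, IsOpen (U i)) → (⋃ i, U i) = Set.univ →
    ∃ (κ : Type) (V : κ → Set Z), (∀ j, IsOpen (V j)) ∧ (⋃ j, V j) = Set.univ ∧
      (∀ j, ∃ i, V j ⊆ U i) ∧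
      ∀ z : Z, {j | z ∈ V j}.Finite ∧ Nat.card {j | z ∈ V j} ≤ n + 1

open Submodule Metric Module

section Aux

variable {E : Type*} [NormedAddCommGroup E] [NormedSpace ℝ E] [FiniteDimensional ℝ E]

/-- points in general position near prescribed points -/
lemma generic_points {d : ℕ} (hE : Module.finrank ℝ E = d + 1)
    (n : ℕ) (p : Fin n → E) {ε : ℝ} (hε : 0 < ε) :
    ∃ c : Fin n → E, (∀ j, ‖c j - p j‖ < ε) ∧
      ∀ T : Finset (Fin n), T.card ≤ d + 1 →
        ((0 : E), (1 : ℝ)) ∉ Submodule.span ℝ ((fun v => (v, (1:ℝ))) '' (c '' ↑T)) := by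
  classical
  induction n with
  | zero =>
    refine ⟨Fin.elim0, fun j => j.elim0, fun T _ hmem => ?_⟩
    have hT : (T : Set (Fin 0)) = ∅ := by ext j; exact j.elim0
    rw [hT] at hmem
    simp only [Set.image_empty, Submodule.span_empty, Submodule.mem_bot, Prod.mk_eq_zero] at hmem
    exact one_ne_zero hmem.2
  | succ n IH =>
    obtain ⟨c₀, hc₀, hgen⟩ := IH (p ∘ Fin.castSucc)
    set ψ : E → E × ℝ := fun v => (v, (1:ℝ)) with hψ
    set W : Finset (Fin n) → Submodule ℝ (E × ℝ) :=
      fun T => Submodule.span ℝ ↑(insert (((0:E),(1:ℝ))) ((T.image c₀).image ψ)) with hW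
    have hW01 : ∀ T, (((0:E),(1:ℝ))) ∈ W T := fun T =>
      Submodule.subset_span (by simp)
    have hWs : ∀ T : Finset (Fin n), Submodule.span ℝ (ψ '' (c₀ '' ↑T)) ≤ W T := by
      intro T
      apply Submodule.span_mono
      intro y hy
      simp only [Finset.coe_insert, Finset.coe_image, Set.mem_insert_iff]
      right
      rwa [Set.image_image] at hy ⊢
    have hWlt : ∀ T : Finset (Fin n), T.card ≤ d → W T < ⊤ := by
      intro T hT
      apply span_lt_top_of_card_lt_finrank
      rw [Finset.toFinset_coe]
      have h1 : (insert (((0:E),(1:ℝ))) ((T.image c₀).image ψ)).card ≤ d + 1 := by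
        have h2 := Finset.card_insert_le (((0:E),(1:ℝ))) ((T.image c₀).image ψ)
        have := (Finset.card_image_le (s := T.image c₀) (f := ψ)).trans
          (Finset.card_image_le (s := T) (f := c₀))
        omega
      have h2 : finrank ℝ (E × ℝ) = d + 2 := by
        rw [Module.finrank_prod, hE, Module.finrank_self]
      omega
    have hWclosed : ∀ T, IsClosed (W T : Set (E × ℝ)) := fun T =>
      Submodule.closed_of_finiteDimensional _
    have hint : ∀ T : Finset (Fin n), T.card ≤ d →
        interior {x : E | (x,(1:ℝ)) ∈ W T} = ∅ := by
      intro T hT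
      by_contra h
      obtain ⟨x0, hx0⟩ := Set.nonempty_iff_ne_empty.2 h
      obtain ⟨r, hr, hball⟩ := Metric.isOpen_iff.1 isOpen_interior x0 hx0
      have hball' : ball x0 r ⊆ {x : E | (x,(1:ℝ)) ∈ W T} :=
        hball.trans interior_subset
      have hx0W : ((x0:E),(1:ℝ)) ∈ W T := hball' (mem_ball_self hr)
      have hy : ∀ y : E, ((y,(0:ℝ)) ∈ W T) := by
        intro y
        rcases eq_or_ne y 0 with rfl | hy0
        · exact Submodule.zero_mem _
        · have hny : (0:ℝ) < ‖y‖ := norm_pos_iff.2 hy0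
          have hnorm : ‖(r / (2 * ‖y‖)) • y‖ < r := by
            rw [norm_smul, Real.norm_eq_abs, abs_of_pos (by positivity)]
            rw [div_mul_eq_mul_div, mul_comm]
            rw [div_lt_iff₀ (by positivity)]
            nlinarith
          have hz : ((x0 + (r/(2*‖y‖)) • y : E), (1:ℝ)) ∈ W T := by
            apply hball'
            simp only [mem_ball, dist_eq_norm, add_sub_cancel_left]
            exact hnorm
          have hsub := Submodule.sub_mem _ hz hx0W
          have hsm := Submodule.smul_mem _ ((2*‖y‖)/r) hsub
          have : ((2*‖y‖)/r) • (((x0 + (r/(2*‖y‖)) • y : E), (1:ℝ)) - ((x0:E),(1:ℝ)))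
              = ((y:E), (0:ℝ)) := by
            have hr' : r ≠ 0 := ne_of_gt hr
            have hy' : ‖y‖ ≠ 0 := ne_of_gt hny
            ext
            · simp only [Prod.fst_sub, Prod.smul_fst, add_sub_cancel_left, smul_smul]
              rw [div_mul_div_comm]
              rw [mul_comm (2*‖y‖) r, div_self (by positivity), one_smul]
            · simp
          rwa [this] at hsm
      have htop : W T = ⊤ := by
        rw [eq_top_iff']
        intro v
        have hv : v = ((v.1 - v.2 • x0 : E), (0:ℝ)) + v.2 • ((x0:E),(1:ℝ)) := by
          ext
          · simp
          · simp
        rw [hv]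
        exact Submodule.add_mem _ (hy _) (Submodule.smul_mem _ _ hx0W)
      exact (hWlt T hT).ne htop
    set A : Finset (Fin n) → Set E :=
      fun T => {x | ¬ (T.card ≤ d ∧ (x, (1:ℝ)) ∈ W T)} with hA
    have hAdense : ∀ T, Dense (A T) := by
      intro T
      by_cases h : T.card ≤ d
      · have hσ : A T = {x : E | (x, (1:ℝ)) ∈ W T}ᶜ := by ext x; simp [hA, h]
        rw [hσ, ← interior_eq_empty_iff_dense_compl]
        exact hint T h
      · have : A T = Set.univ := by ext x; simp [hA, h]
        rw [this]; exact dense_univ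
    have hD : Dense (⋂ T : Finset (Fin n), A T) := by
      apply dense_iInter_of_isOpen
      · intro T
        by_cases h : T.card ≤ d
        · have : A T = ((fun x : E => (x, (1:ℝ))) ⁻¹' (W T : Set (E × ℝ)))ᶜ := by
            ext x; simp [hA, h]
          rw [this]
          exact (((hWclosed T).preimage (by fun_prop)).isOpen_compl)
        · have : A T = Set.univ := by ext x; simp [hA, h]
          rw [this]; exact isOpen_univ
      · exact hAdense
    obtain ⟨x, hxball, hxD⟩ :=
      hD.inter_open_nonempty (ball (p (Fin.last n)) ε) isOpen_ball
        ⟨_, mem_ball_self hε⟩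
    refine ⟨Fin.snoc c₀ x, ?_, ?_⟩
    · intro j
      refine Fin.lastCases ?_ ?_ j
      · rw [Fin.snoc_last, ← dist_eq_norm]
        exact hxball
      · intro k
        rw [Fin.snoc_castSucc]
        exact hc₀ k
    · intro T' hT'
      by_cases hlast : Fin.last n ∈ T'
      · -- case last ∈ T'
        set T : Finset (Fin n) := Finset.univ.filter (fun k => Fin.castSucc k ∈ T') with hTdef
        have hTcard : T.card ≤ d := by
          have hsub : T.image Fin.castSucc ⊆ T'.erase (Fin.last n) := by
            intro j hj
            simp only [Finset.mem_image] at hj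
            obtain ⟨k, hk, rfl⟩ := hj
            simp only [hTdef, Finset.mem_filter] at hk
            exact Finset.mem_erase.2 ⟨(Fin.castSucc_lt_last k).ne, hk.2⟩
          have h1 := Finset.card_le_card hsub
          rw [Finset.card_image_of_injective _ (Fin.castSucc_injective n)] at h1
          have h2 := Finset.card_erase_of_mem hlast
          omega
        have himg : (Fin.snoc c₀ x : Fin (n+1) → E) '' ↑T' = insert x (c₀ '' ↑T) := by
          ext y
          simp only [Set.mem_image, Set.mem_insert_iff, Finset.mem_coe]
          constructor
          · rintro ⟨j, hj, rfl⟩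
            rcases eq_or_ne j (Fin.last n) with rfl | hne
            · left; rw [Fin.snoc_last]
            · obtain ⟨k, rfl⟩ := Fin.exists_castSucc_eq.2 hne
              right
              exact ⟨k, by simp [hTdef, hj], by simp⟩
          · rintro (rfl | ⟨k, hk, rfl⟩)
            · exact ⟨Fin.last n, hlast, by simp⟩
            · refine ⟨Fin.castSucc k, ?_, by simp⟩
              simp only [hTdef, Finset.mem_filter] at hk
              exact hk.2
        rw [himg]
        intro hmem
        have hins : ψ '' insert x (c₀ '' ↑T) = insert (ψ x) (ψ '' (c₀ '' ↑T)) :=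
          Set.image_insert_eq
        rw [hins, Submodule.span_insert] at hmem
        obtain ⟨a, ha, b, hb, hab⟩ := Submodule.mem_sup.1 hmem
        obtain ⟨t, rfl⟩ := Submodule.mem_span_singleton.1 ha
        rcases eq_or_ne t 0 with rfl | ht
        · rw [zero_smul, zero_add] at hab
          exact hgen T (by omega) (hab ▸ hb)
        · -- then (x,1) ∈ W T, contradicting hxD
          have hxW : ((x : E), (1:ℝ)) ∈ W T := by
            have h1 : ψ x = t⁻¹ • (((0:E),(1:ℝ)) - b) := by
              rw [← hab]
              rw [add_sub_cancel_right, smul_smul, inv_mul_cancel₀ ht, one_smul]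
            have h2 : (((0:E),(1:ℝ)) - b) ∈ W T :=
              Submodule.sub_mem _ (hW01 T) (hWs T hb)
            have h3 : ψ x ∈ W T := h1 ▸ Submodule.smul_mem _ _ h2
            exact h3
          have hxA : x ∈ A T := Set.mem_iInter.1 hxD T
          exact hxA ⟨hTcard, hxW⟩
      · -- last ∉ T'
        set T : Finset (Fin n) := Finset.univ.filter (fun k => Fin.castSucc k ∈ T') with hTdef
        have hTcard : T.card ≤ d + 1 := by
          have hsub : T.image Fin.castSucc ⊆ T' := by
            intro j hj
            simp only [Finset.mem_image] at hj
            obtain ⟨k, hk, rfl⟩ := hj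
            simp only [hTdef, Finset.mem_filter] at hk
            exact hk.2
          have h1 := Finset.card_le_card hsub
          rw [Finset.card_image_of_injective _ (Fin.castSucc_injective n)] at h1
          omega
        have himg : (Fin.snoc c₀ x : Fin (n+1) → E) '' ↑T' = c₀ '' ↑T := by
          ext y
          simp only [Set.mem_image, Finset.mem_coe]
          constructor
          · rintro ⟨j, hj, rfl⟩
            have hne : j ≠ Fin.last n := fun h => hlast (h ▸ hj)
            obtain ⟨k, rfl⟩ := Fin.exists_castSucc_eq.2 hne
            exact ⟨k, by simp [hTdef, hj], by simp⟩
          · rintro ⟨k, hk, rfl⟩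
            simp only [hTdef, Finset.mem_filter] at hk
            exact ⟨Fin.castSucc k, hk.2, by simp⟩
        rw [himg]
        exact hgen T hTcard

lemma approx_nonvanishing {Z : Type} [TopologicalSpace Z] [CompactSpace Z] [T2Space Z]
    {d : ℕ} (hdim : CoveringDimLE Z d)
    {E : Type*} [NormedAddCommGroup E] [NormedSpace ℝ E] [FiniteDimensional ℝ E]
    (hE : Module.finrank ℝ E = d + 1)
    (F : Z → E) (hF : Continuous F) {ε : ℝ} (hε : 0 < ε) :
    ∃ G : Z → E, Continuous G ∧ (∀ z, ‖G z - F z‖ ≤ ε) ∧ ∀ z, G z ≠ 0 := by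
  classical
  set U : Z → Set Z := fun a => F ⁻¹' (ball (F a) (ε/4)) with hU
  obtain ⟨κ, V, hVo, hVcov, hVref, hVord⟩ := hdim Z U
    (fun a => (isOpen_ball).preimage hF)
    (by
      ext z
      simp only [Set.mem_iUnion, Set.mem_univ, iff_true]
      exact ⟨z, by simp [hU, hε, mem_ball_self (by positivity : (0:ℝ) < ε/4)]⟩)
  obtain ⟨t, ht⟩ := isCompact_univ.elim_finite_subcover V hVo (by rw [hVcov])
  have hfin : Finite {j : κ // j ∈ t ∧ (V j).Nonempty} := by
    have : {j : κ | j ∈ t ∧ (V j).Nonempty}.Finite :=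
      t.finite_toSet.subset (fun j hj => hj.1)
    exact this.to_subtype
  have hft : Fintype {j : κ // j ∈ t ∧ (V j).Nonempty} := Fintype.ofFinite _
  set n := Fintype.card {j : κ // j ∈ t ∧ (V j).Nonempty} with hn
  set ek : Fin n ≃ {j : κ // j ∈ t ∧ (V j).Nonempty} := (Fintype.equivFin _).symm with hek
  set V' : Fin n → Set Z := fun i => V (ek i).1 with hV'
  have hcov' : ∀ z : Z, ∃ i, z ∈ V' i := by
    intro z
    obtain ⟨j, hjt, hzj⟩ := Set.mem_iUnion₂.1 (ht (Set.mem_univ z))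
    refine ⟨ek.symm ⟨j, hjt, ⟨z, hzj⟩⟩, ?_⟩
    simp [hV']
    exact hzj
  have horder : ∀ z : Z, (Finset.univ.filter (fun i => z ∈ V' i)).card ≤ d + 1 := by
    intro z
    have hfin2 : Finite {j : κ // z ∈ V j} := ((hVord z).1).to_subtype
    have hinj : Function.Injective
        (fun i : {i : Fin n // z ∈ V' i} => (⟨(ek i.1).1, i.2⟩ : {j : κ // z ∈ V j})) := by
      intro a b hab
      simp only [Subtype.mk_eq_mk] at hab
      exact Subtype.ext (ek.injective (Subtype.ext hab))
    have h1 : Nat.card {i : Fin n // z ∈ V' i} ≤ Nat.card {j : κ // z ∈ V j} :=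
      Nat.card_le_card_of_injective _ hinj
    have h2 : Nat.card {i : Fin n // z ∈ V' i} =
        (Finset.univ.filter (fun i => z ∈ V' i)).card := by
      rw [Nat.card_eq_fintype_card, Fintype.card_subtype]
    rw [h2] at h1
    exact h1.trans ((hVord z).2)
  set p : Fin n → Z := fun i => ((ek i).2.2).choose with hp
  have hpV : ∀ i, p i ∈ V' i := fun i => ((ek i).2.2).choose_spec
  obtain ⟨c, hc, hgen⟩ := generic_points hE n (F ∘ p) (by positivity : (0:ℝ) < ε/4)
  obtain ⟨ρ, hρ⟩ := PartitionOfUnity.exists_isSubordinate isClosed_univ V'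
    (fun i => hVo _) (fun z _ => Set.mem_iUnion.2 (hcov' z))
  set G : Z → E := fun z => ∑ i, ρ i z • c i with hG
  have hsum1 : ∀ z : Z, ∑ i, ρ i z = 1 := by
    intro z
    have := ρ.sum_eq_one (Set.mem_univ z)
    rwa [finsum_eq_sum_of_fintype] at this
  have hsupp : ∀ i z, ρ i z ≠ 0 → z ∈ V' i := by
    intro i z h
    exact hρ i (subset_tsupport _ h)
  have hclose : ∀ i z, ρ i z ≠ 0 → ‖c i - F z‖ ≤ ε := by
    intro i z h
    obtain ⟨a, ha⟩ := hVref (ek i).1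
    have hz : F z ∈ ball (F a) (ε/4) := ha (hsupp i z h)
    have hpz : F (p i) ∈ ball (F a) (ε/4) := ha (hpV i)
    have h1 : ‖c i - F (p i)‖ < ε/4 := hc i
    have h2 : dist (F z) (F (p i)) < ε/2 := by
      calc dist (F z) (F (p i)) ≤ dist (F z) (F a) + dist (F (p i)) (F a) :=
            dist_triangle_right _ _ _
        _ < ε/4 + ε/4 := add_lt_add hz hpz
        _ = ε/2 := by ring
    calc ‖c i - F z‖ ≤ ‖c i - F (p i)‖ + ‖F (p i) - F z‖ := by
          have : c i - F z = (c i - F (p i)) + (F (p i) - F z) := by abel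
          rw [this]; exact norm_add_le _ _
      _ ≤ ε/4 + ε/2 := by
          refine add_le_add h1.le ?_
          rw [← dist_eq_norm, dist_comm]
          exact h2.le
      _ ≤ ε := by linarith
  refine ⟨G, ?_, ?_, ?_⟩
  · exact continuous_finset_sum _ (fun i _ => ((ρ i).continuous).smul continuous_const)
  · intro z
    have hGF : G z - F z = ∑ i, ρ i z • (c i - F z) := by
      simp only [hG, smul_sub, Finset.sum_sub_distrib, ← Finset.sum_smul, hsum1 z, one_smul]
    rw [hGF]
    calc ‖∑ i, ρ i z • (c i - F z)‖ ≤ ∑ i, ‖ρ i z • (c i - F z)‖ :=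
          norm_sum_le _ _
      _ ≤ ∑ i, ρ i z * ε := by
          apply Finset.sum_le_sum
          intro i _
          rw [norm_smul, Real.norm_eq_abs, abs_of_nonneg (ρ.nonneg i z)]
          rcases eq_or_ne (ρ i z) 0 with h | h
          · simp [h]
          · exact mul_le_mul_of_nonneg_left (hclose i z h) (ρ.nonneg i z)
      _ = ε := by rw [← Finset.sum_mul, hsum1 z, one_mul]
  · intro z h0
    set T : Finset (Fin n) := Finset.univ.filter (fun i => ρ i z ≠ 0) with hT
    have hTcard : T.card ≤ d + 1 := by
      refine (Finset.card_le_card ?_).trans (horder z)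
      intro i hi
      simp only [hT, Finset.mem_filter, Finset.mem_univ, true_and] at hi ⊢
      exact hsupp i z hi
    apply hgen T hTcard
    have h1 : ∑ i ∈ T, ρ i z • c i = ∑ i, ρ i z • c i :=
      Finset.sum_filter_of_ne (fun i _ hne hzero => hne (by rw [hzero, zero_smul]))
    have h2 : ∑ i ∈ T, ρ i z = 1 := by
      rw [Finset.sum_filter_of_ne (fun i _ hne => hne)]
      exact hsum1 z
    have hmem : ((0:E), (1:ℝ)) = ∑ i ∈ T, ρ i z • ((c i, (1:ℝ)) : E × ℝ) := by
      apply Prod.ext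
      · rw [Prod.fst_sum]
        simp only [Prod.smul_mk]
        rw [h1]
        exact h0.symm
      · rw [Prod.snd_sum]
        simp only [Prod.smul_mk, smul_eq_mul, mul_one]
        exact h2.symm
    rw [hmem]
    apply Submodule.sum_mem
    intro i hi
    apply Submodule.smul_mem
    apply Submodule.subset_span
    exact ⟨c i, ⟨i, hi, rfl⟩, rfl⟩

end Aux

set_option maxHeartbeats 1000000 in
/-- A compact space of covering dimension `d` containing a topological `d`-sphere
admits a continuous self-map without fixed points. -/
theorem fixed_point_free_selfmap_of_sphere
    (Z : Type) [TopologicalSpace Z] [CompactSpace Z] [T2Space Z]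
    (d : ℕ)
    (hdim : CoveringDimLE Z d)
    (hdim' : ∀ m : ℕ, CoveringDimLE Z m → d ≤ m)
    (S : Set Z)
    (hS : Nonempty (S ≃ₜ (Metric.sphere (0 : EuclideanSpace ℝ (Fin (d + 1))) 1))) :
    ∃ f : Z → Z, Continuous f ∧ ∀ z : Z, f z ≠ z := by
  classical
  obtain ⟨e⟩ := hS
  set E := EuclideanSpace ℝ (Fin (d+1)) with hEdef
  have hE : Module.finrank ℝ E = d + 1 := finrank_euclideanSpace_fin
  have hScomp : IsCompact S := by
    have : CompactSpace S := e.symm.compactSpace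
    exact isCompact_iff_compactSpace.2 this
  have hSclosed : IsClosed S := hScomp.isClosed
  let f₀ : C(S, E) := ⟨fun s => (e s : E), by
    exact continuous_subtype_val.comp e.continuous⟩
  obtain ⟨Fc, hFc⟩ := f₀.exists_restrict_eq hSclosed
  set F : Z → E := ⇑Fc with hFdef
  have hFS : ∀ (z : Z) (hz : z ∈ S), F z = (e ⟨z, hz⟩ : E) := by
    intro z hz
    have h := congrFun (congrArg DFunLike.coe hFc) ⟨z, hz⟩
    exact h
  have hFnorm : ∀ z ∈ S, ‖F z‖ = 1 := by
    intro z hz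
    rw [hFS z hz]
    exact mem_sphere_zero_iff_norm.1 (e ⟨z, hz⟩).2
  obtain ⟨G, hGc, hGF, hGne⟩ :=
    approx_nonvanishing hdim hE F Fc.continuous (by norm_num : (0:ℝ) < 1/8)
  have hK : IsClosed {z : Z | ‖F z‖ ≤ 1/4} :=
    isClosed_le (Fc.continuous.norm) continuous_const
  have hdisj : Disjoint S {z : Z | ‖F z‖ ≤ 1/4} := by
    rw [Set.disjoint_left]
    intro z hz hz2
    simp only [Set.mem_setOf_eq] at hz2
    rw [hFnorm z hz] at hz2
    norm_num at hz2
  obtain ⟨u, hu0, hu1, hu01⟩ := exists_continuous_zero_one_of_isClosed hSclosed hK hdisj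
  set G' : Z → E := fun z => F z + u z • (G z - F z) with hG'def
  have hG'c : Continuous G' :=
    Fc.continuous.add (u.continuous.smul (hGc.sub Fc.continuous))
  have hG'S : ∀ (z : Z), z ∈ S → G' z = F z := by
    intro z hz
    simp only [hG'def]
    rw [show u z = 0 from hu0 hz]
    simp
  have hG'ne : ∀ z, G' z ≠ 0 := by
    intro z
    rcases le_or_gt ‖F z‖ (1/4) with h | h
    · have hu : u z = 1 := hu1 h
      simp only [hG'def, hu, one_smul]
      rw [show F z + (G z - F z) = G z by abel]
      exact hGne z
    · intro h0
      have h1 : ‖G' z - F z‖ ≤ 1/8 := by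
        have : G' z - F z = u z • (G z - F z) := by simp [hG'def]
        rw [this, norm_smul, Real.norm_eq_abs,
          abs_of_nonneg (hu01 z).1]
        calc u z * ‖G z - F z‖ ≤ 1 * (1/8) :=
              mul_le_mul (hu01 z).2 (hGF z) (norm_nonneg _) zero_le_one
          _ = 1/8 := by ring
      rw [h0, zero_sub, norm_neg] at h1
      linarith
  have hnorm_ne : ∀ z, ‖G' z‖ ≠ 0 := fun z => norm_ne_zero_iff.2 (hG'ne z)
  set g : Z → E := fun z => ‖G' z‖⁻¹ • G' z with hgdef
  have hgmem : ∀ z, g z ∈ Metric.sphere (0:E) 1 := by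
    intro z
    rw [mem_sphere_zero_iff_norm]
    simp only [hgdef]
    rw [norm_smul, norm_inv, norm_norm, inv_mul_cancel₀ (hnorm_ne z)]
  have hgc : Continuous g := ((hG'c.norm).inv₀ hnorm_ne).smul hG'c
  have hneg : ∀ z, (-(g z)) ∈ Metric.sphere (0:E) 1 := by
    intro z
    rw [mem_sphere_zero_iff_norm, norm_neg]
    exact mem_sphere_zero_iff_norm.1 (hgmem z)
  refine ⟨fun z => ((e.symm ⟨-(g z), hneg z⟩ : S) : Z), ?_, ?_⟩
  · exact continuous_subtype_val.comp
      (e.symm.continuous.comp (Continuous.subtype_mk hgc.neg _))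
  · intro z hfz
    have hzS : z ∈ S := by
      rw [← hfz]; exact (e.symm ⟨-(g z), hneg z⟩).2
    have h1 : e.symm ⟨-(g z), hneg z⟩ = (⟨z, hzS⟩ : S) := Subtype.ext hfz
    have h2 : (⟨-(g z), hneg z⟩ : Metric.sphere (0:E) 1) = e ⟨z, hzS⟩ := by
      rw [← h1, e.apply_symm_apply]
    have h3 : G' z = (e ⟨z, hzS⟩ : E) := by rw [hG'S z hzS, hFS z hzS]
    have h4 : ‖(e ⟨z, hzS⟩ : E)‖ = 1 := mem_sphere_zero_iff_norm.1 (e ⟨z, hzS⟩).2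
    have h5 : g z = (e ⟨z, hzS⟩ : E) := by
      show ‖G' z‖⁻¹ • G' z = (e ⟨z, hzS⟩ : E)
      rw [h3, h4, inv_one, one_smul]
    have h6 : -(e ⟨z, hzS⟩ : E) = (e ⟨z, hzS⟩ : E) := by
      have := congrArg Subtype.val h2
      simpa [h5] using this
    have h7 : (e ⟨z, hzS⟩ : E) = 0 := by
      have := congrArg (· + (e ⟨z, hzS⟩ : E)) h6
      simp only [neg_add_cancel] at this
      have h8 : (2:ℝ) • (e ⟨z, hzS⟩ : E) = 0 := by
        rw [two_smul]; exact this.symm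
      rcases smul_eq_zero.1 h8 with h | h
      · norm_num at h
      · exact h
    rw [h7] at h4
    norm_num at h4
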